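/- arXiv:2006.00121 — 3 statements merged into one kernel-verified Lean document; each statement's English description precedes it below -/
import Mathlib

section
/- Let n₁ < n₂ < ⋯ < n_k be distinct positive integers with k ≥ 3, and define F : ℝ → ℝ by F(x) = ((k−1)·n₁n₂⋯n_k/2)·Σ_{r=1}^k |1 − n_r x|·(1 − n_r x)^{k−3} / ∏_{j≠r}(n_j − n_r). Then F is a probability density function supported on [1/n_k, 1/n₁]: namely F(x) ≥ 0 for all x ∈ ℝ, F(x) = 0 for all x ∉ [1/n_k, 1/n₁], and ∫_ℝ F(t) dt = 1. -/
open Finset Filter MeasureTheory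


noncomputable def dd (T : Finset ℝ) (f : ℝ → ℝ) : ℝ :=
  ∑ t ∈ T, f t / ∏ u ∈ T.erase t, (t - u)

lemma dd_congr {T : Finset ℝ} {f g : ℝ → ℝ} (h : ∀ t ∈ T, f t = g t) :
    dd T f = dd T g :=
  Finset.sum_congr rfl fun t ht => by rw [h t ht]

lemma dd_pull (T : Finset ℝ) (f : ℝ → ℝ) (s a : ℝ) (ha : a ∈ T) :
    dd T (fun t => (t - s) * f t) = (a - s) * dd T f + dd (T.erase a) f := by
  unfold dd
  rw [Finset.mul_sum]
  have key : ∀ t ∈ T, (t - s) * f t / ∏ u ∈ T.erase t, (t - u)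
      = (a - s) * (f t / ∏ u ∈ T.erase t, (t - u))
        + (t - a) * f t / ∏ u ∈ T.erase t, (t - u) := by
    intro t _
    ring
  rw [Finset.sum_congr rfl key, Finset.sum_add_distrib]
  congr 1
  -- second sum equals dd over erase
  rw [← Finset.add_sum_erase _ _ ha]
  have h0 : (a - a) * f a / ∏ u ∈ T.erase a, (a - u) = 0 := by
    simp
  rw [h0, zero_add]
  refine Finset.sum_congr rfl fun t ht => ?_
  have hta : t ≠ a := Finset.ne_of_mem_erase ht
  have htT : t ∈ T := Finset.mem_of_mem_erase ht
  have haT : a ∈ T.erase t := Finset.mem_erase.2 ⟨fun h => hta h.symm, ha⟩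
  have hprod : ∏ u ∈ T.erase t, (t - u)
      = (t - a) * ∏ u ∈ (T.erase a).erase t, (t - u) := by
    rw [Finset.erase_right_comm]
    exact (Finset.mul_prod_erase _ _ haT).symm
  rw [hprod, mul_div_mul_left _ _ (sub_ne_zero.2 hta)]



lemma dd_one_eq_zero : ∀ (m : ℕ) (T : Finset ℝ), T.card = m → 2 ≤ m →
    dd T (fun _ => (1:ℝ)) = 0 := by
  intro m
  induction m using Nat.strong_induction_on with
  | _ m ih =>
    intro T hcard hm
    rcases eq_or_lt_of_le hm with h2 | h3
    · -- card = 2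
      obtain ⟨a, b, hab, rfl⟩ := Finset.card_eq_two.1 (hcard.trans h2.symm)
      have hb : b ∉ ({a} : Finset ℝ) → True := fun _ => trivial
      have hba : b - a ≠ 0 := sub_ne_zero.2 (Ne.symm hab)
      have hab' : a - b ≠ 0 := sub_ne_zero.2 hab
      unfold dd
      rw [Finset.sum_pair hab]
      have e1 : ({a, b} : Finset ℝ).erase a = {b} := by
        rw [Finset.erase_insert]
        simp [hab]
      have e2 : ({a, b} : Finset ℝ).erase b = {a} := by
        rw [Finset.pair_comm, Finset.erase_insert]
        simp [Ne.symm hab]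
      rw [e1, e2]
      simp only [Finset.prod_singleton]
      field_simp
      ring
    · -- card ≥ 3
      obtain ⟨u, hu, v, hv, huv⟩ := Finset.one_lt_card.1 (by omega : 1 < T.card)
      have h1 := dd_pull T (fun _ => (1:ℝ)) 0 u hu
      have h2 := dd_pull T (fun _ => (1:ℝ)) 0 v hv
      have hu' : dd (T.erase u) (fun _ => (1:ℝ)) = 0 := by
        apply ih (m-1) (by omega) _ _ (by omega)
        rw [Finset.card_erase_of_mem hu, hcard]
      have hv' : dd (T.erase v) (fun _ => (1:ℝ)) = 0 := by
        apply ih (m-1) (by omega) _ _ (by omega)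
        rw [Finset.card_erase_of_mem hv, hcard]
      rw [hu'] at h1
      rw [hv'] at h2
      have huv' : u - v ≠ 0 := sub_ne_zero.2 huv
      have : (u - v) * dd T (fun _ => (1:ℝ)) = 0 := by
        rw [h1] at h2
        ring_nf
        ring_nf at h2
        linarith
      rcases mul_eq_zero.1 this with h | h
      · exact absurd h huv'
      · exact h

lemma dd_pow_eq_zero : ∀ (d : ℕ) (T : Finset ℝ), d + 2 ≤ T.card →
    dd T (fun t => t ^ d) = 0 := by
  intro d
  induction d with
  | zero =>
    intro T hT
    simpa using dd_one_eq_zero T.card T rfl (by omega)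
  | succ d ih =>
    intro T hT
    have hne : T.Nonempty := Finset.card_pos.1 (by omega)
    obtain ⟨u, hu⟩ := hne
    have heq : dd T (fun t => t ^ (d+1)) = dd T (fun t => (t - 0) * t ^ d) :=
      Finset.sum_congr rfl fun t _ => by ring
    rw [heq, dd_pull T _ 0 u hu, ih T (by omega), ih (T.erase u) ?_]
    · ring
    · rw [Finset.card_erase_of_mem hu]; omega

lemma dd_linear_sum {m : ℕ} (T : Finset ℝ) (e : ℕ → ℝ)
    (h : ∀ d, d < m → d + 2 ≤ T.card) :
    dd T (fun t => ∑ d ∈ Finset.range m, e d * t ^ d) = 0 := by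
  unfold dd
  have : ∀ t ∈ T, (∑ d ∈ Finset.range m, e d * t ^ d) / ∏ u ∈ T.erase t, (t - u)
      = ∑ d ∈ Finset.range m, e d * (t ^ d / ∏ u ∈ T.erase t, (t - u)) := by
    intro t _
    rw [Finset.sum_div]
    exact Finset.sum_congr rfl fun d _ => by rw [mul_div_assoc]
  rw [Finset.sum_congr rfl this, Finset.sum_comm]
  refine Finset.sum_eq_zero fun d hd => ?_
  rw [← Finset.mul_sum]
  have := dd_pow_eq_zero d T (h d (Finset.mem_range.1 hd))
  unfold dd at this
  rw [this, mul_zero]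

lemma dd_affine_pow (T : Finset ℝ) (a b : ℝ) (p : ℕ) (hp : p + 2 ≤ T.card) :
    dd T (fun t => (a + b * t) ^ p) = 0 := by
  have heq : ∀ t ∈ T, (a + b * t) ^ p
      = ∑ d ∈ Finset.range (p+1), (b ^ d * a ^ (p - d) * (p.choose d)) * t ^ d := by
    intro t _
    rw [add_comm, add_pow]
    exact Finset.sum_congr rfl fun d _ => by rw [mul_pow]; ring
  rw [dd_congr heq]
  exact dd_linear_sum T _ fun d hd => by omega

noncomputable def tau (p : ℕ) (s t : ℝ) : ℝ := if s < t then (t - s) ^ p else 0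

lemma tau_succ (p : ℕ) (s t : ℝ) : tau (p+1) s t = (t - s) * tau p s t := by
  unfold tau
  split
  · rw [pow_succ']
  · rw [mul_zero]

lemma tau_mono (s : ℝ) {a b : ℝ} (hab : a ≤ b) : tau 0 s a ≤ tau 0 s b := by
  unfold tau
  by_cases h1 : s < a
  · rw [if_pos h1, if_pos (lt_of_lt_of_le h1 hab), pow_zero, pow_zero]
  · rw [if_neg h1]
    split <;> norm_num

lemma dd_tau_nonneg : ∀ (m : ℕ) (T : Finset ℝ), T.card = m → 2 ≤ m → ∀ s : ℝ,
    0 ≤ dd T (tau (m - 2) s) := by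
  intro m
  induction m using Nat.strong_induction_on with
  | _ m ih =>
    intro T hcard hm s
    rcases eq_or_lt_of_le hm with h2 | h3
    · -- base: two nodes
      obtain ⟨a, b, hab, rfl⟩ := Finset.card_eq_two.1 (hcard.trans h2.symm)
      have e1 : ({a, b} : Finset ℝ).erase a = {b} := by
        rw [Finset.erase_insert]; simp [hab]
      have e2 : ({a, b} : Finset ℝ).erase b = {a} := by
        rw [Finset.pair_comm, Finset.erase_insert]; simp [Ne.symm hab]
      unfold dd
      rw [Finset.sum_pair hab, e1, e2]
      simp only [Finset.prod_singleton]
      have hmm : m - 2 = 0 := by omega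
      rw [hmm]
      rcases lt_or_gt_of_ne hab with h | h
      · have : tau 0 s a / (a - b) + tau 0 s b / (b - a)
            = (tau 0 s b - tau 0 s a) / (b - a) := by
          have : a - b = -(b - a) := by ring
          rw [this, div_neg]
          ring
        rw [this]
        exact div_nonneg (by linarith [tau_mono s h.le]) (by linarith)
      · have : tau 0 s a / (a - b) + tau 0 s b / (b - a)
            = (tau 0 s a - tau 0 s b) / (a - b) := by
          have : b - a = -(a - b) := by ring
          rw [this, div_neg]
          ring
        rw [this]
        exact div_nonneg (by linarith [tau_mono s h.le]) (by linarith)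
    · -- inductive step, m ≥ 3
      have hne : T.Nonempty := Finset.card_pos.1 (by omega)
      set a := T.min' hne with ha
      set b := T.max' hne with hb
      have haT : a ∈ T := T.min'_mem hne
      have hbT : b ∈ T := T.max'_mem hne
      have hab : a < b := T.min'_lt_max'_of_card (by omega)
      have hp : m - 2 = (m - 3) + 1 := by omega
      rcases le_or_gt b s with hbs | hsb
      · -- all values zero
        have : dd T (tau (m-2) s) = 0 := by
          apply Finset.sum_eq_zero
          intro t ht
          have : ¬ s < t := by
            have := T.le_max' t ht
            push_neg
            linarith
          unfold tau
          rw [if_neg this, zero_div]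
        rw [this]
      rcases le_or_gt s a with hsa | has
      · -- polynomial branch
        have heq : ∀ t ∈ T, tau (m-2) s t = (-s + 1 * t) ^ (m-2) := by
          intro t ht
          have hta : a ≤ t := T.min'_le t ht
          unfold tau
          rcases eq_or_lt_of_le (le_trans hsa hta) with h | h
          · rw [if_neg (by rw [h]; exact lt_irrefl t), ← h]
            have h0 : (-s + 1 * s : ℝ) = 0 := by ring
            rw [h0, zero_pow (by omega : m - 2 ≠ 0)]
          · rw [if_pos h]; ring_nf
        rw [dd_congr heq, dd_affine_pow T (-s) 1 (m-2) (by omega)]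
      · -- middle branch
        have htauf : tau (m-2) s = fun t => (t - s) * tau (m-3) s t := by
          funext t
          rw [hp, tau_succ]
        have h1 := dd_pull T (tau (m-3) s) s a haT
        have h2 := dd_pull T (tau (m-3) s) s b hbT
        rw [← htauf] at h1 h2
        have hB2 : 0 ≤ dd (T.erase a) (tau (m-3) s) := by
          have hc : (T.erase a).card = m - 1 := by
            rw [Finset.card_erase_of_mem haT, hcard]
          have := ih (m-1) (by omega) (T.erase a) hc (by omega) s
          have hmm : m - 1 - 2 = m - 3 := by omega
          rwa [hmm] at this
        have hB1 : 0 ≤ dd (T.erase b) (tau (m-3) s) := by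
          have hc : (T.erase b).card = m - 1 := by
            rw [Finset.card_erase_of_mem hbT, hcard]
          have := ih (m-1) (by omega) (T.erase b) hc (by omega) s
          have hmm : m - 1 - 2 = m - 3 := by omega
          rwa [hmm] at this
        have key : (b - a) * dd T (tau (m-2) s)
            = (b - s) * dd (T.erase a) (tau (m-3) s)
              + (s - a) * dd (T.erase b) (tau (m-3) s) := by
          linear_combination (b - s) * h1 - (a - s) * h2
        nlinarith [mul_nonneg (by linarith : (0:ℝ) ≤ b - s) hB2,
          mul_nonneg (by linarith : (0:ℝ) ≤ s - a) hB1]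


lemma rho_hasDerivAt (p : ℕ) (hp : 1 ≤ p) (u : ℝ) :
    HasDerivAt (fun v : ℝ => if v < 0 then v ^ (p + 1) else 0)
      (((p : ℝ) + 1) * (if u < 0 then u ^ p else 0)) u := by
  rcases lt_trichotomy u 0 with h | h | h
  · have hev : (fun v : ℝ => if v < 0 then v ^ (p + 1) else 0) =ᶠ[nhds u]
        fun v => v ^ (p + 1) := by
      filter_upwards [isOpen_Iio.mem_nhds h] with v hv
      exact if_pos hv
    have hder := (hasDerivAt_pow (p + 1) u).congr_of_eventuallyEq hev
    rw [if_pos h]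
    refine hder.congr_deriv ?_
    push_cast
    ring_nf
  · subst h
    rw [if_neg (lt_irrefl 0), mul_zero, hasDerivAt_iff_tendsto_slope]
    apply squeeze_zero_norm (a := fun v : ℝ => |v| ^ p)
    · intro v
      have hf0 : (if (0:ℝ) < 0 then (0:ℝ) ^ (p + 1) else 0) = 0 := by
        rw [if_neg (lt_irrefl 0)]
      rcases lt_trichotomy v 0 with hv | hv | hv
      · have : slope (fun v : ℝ => if v < 0 then v ^ (p + 1) else 0) 0 v = v ^ p := by
          rw [slope_def_field]
          rw [if_pos hv, hf0, sub_zero, sub_zero, pow_succ, mul_div_assoc,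
            div_self (ne_of_lt hv), mul_one]
        rw [this]
        rw [Real.norm_eq_abs, abs_pow]
      · subst hv
        simp [slope_def_field, hf0]
      · have : slope (fun v : ℝ => if v < 0 then v ^ (p + 1) else 0) 0 v = 0 := by
          rw [slope_def_field, if_neg (not_lt.2 hv.le), hf0, sub_zero, sub_zero, zero_div]
        rw [this, norm_zero]
        positivity
    · have hcont : Continuous fun v : ℝ => |v| ^ p := continuous_abs.pow p
      have := hcont.tendsto' 0 0 (by simp [zero_pow (by omega : p ≠ 0)])
      exact this.mono_left nhdsWithin_le_nhds
  · have hev : (fun v : ℝ => if v < 0 then v ^ (p + 1) else 0) =ᶠ[nhds u]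
        fun _ => (0:ℝ) := by
      filter_upwards [isOpen_Ioi.mem_nhds h] with v hv
      exact if_neg (not_lt.2 hv.le)
    have hder := (hasDerivAt_const u (0:ℝ)).congr_of_eventuallyEq hev
    rw [if_neg (not_lt.2 h.le), mul_zero]
    exact hder


/-- The density `F` from Theorem 2 is a probability density function supported on
`[1/n_k, 1/n₁]`: it is nonnegative, vanishes off `[1/n_k, 1/n₁]`, and integrates to `1`. -/
theorem density_is_pdf
    (k : ℕ) (hk : 3 ≤ k) (n : Fin k → ℕ) (hpos : ∀ j, 0 < n j) (hmono : StrictMono n)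
    (F : ℝ → ℝ)
    (hF : ∀ x : ℝ, F x = ((k - 1 : ℝ) * ∏ j, (n j : ℝ)) / 2 *
      ∑ r, |1 - (n r : ℝ) * x| * (1 - (n r : ℝ) * x) ^ (k - 3) /
        ∏ j ∈ Finset.univ.erase r, ((n j : ℝ) - (n r : ℝ))) :
    (∀ x : ℝ, 0 ≤ F x) ∧
    (∀ x : ℝ, x ∉ Set.Icc ((n ⟨k - 1, by omega⟩ : ℝ))⁻¹ ((n ⟨0, by omega⟩ : ℝ))⁻¹ → F x = 0) ∧
    (∫ t : ℝ, F t) = 1 := by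
  classical
  set t : Fin k → ℝ := fun j => (n j : ℝ) with ht
  have htmono : StrictMono t := fun i j hij => by
    exact_mod_cast Nat.cast_lt.2 (hmono hij)
  have htinj : Function.Injective t := htmono.injective
  have htpos : ∀ j, 0 < t j := fun j => by
    show (0:ℝ) < (n j : ℝ)
    exact_mod_cast hpos j
  set T : Finset ℝ := Finset.image t Finset.univ with hT
  have hTcard : T.card = k := by
    rw [hT, Finset.card_image_of_injective _ htinj, Finset.card_univ, Fintype.card_fin]
  set Pn : ℝ := ∏ j, t j with hPn
  have hPnpos : 0 < Pn := Finset.prod_pos fun j _ => htpos j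
  obtain ⟨e, he⟩ : ∃ e : ℝ, e = (-1 : ℝ) ^ (k - 1) := ⟨_, rfl⟩
  have hTpos : ∀ y ∈ T, 0 < y := by
    intro y hy
    obtain ⟨j, -, rfl⟩ := Finset.mem_image.1 hy
    exact htpos j
  -- denominators
  set D : Fin k → ℝ := fun r => ∏ j ∈ Finset.univ.erase r, (t j - t r) with hD
  have hQ : ∀ r : Fin k, ∏ u ∈ T.erase (t r), (t r - u) =
      ∏ j ∈ Finset.univ.erase r, (t r - t j) := by
    intro r
    rw [hT, ← Finset.image_erase htinj,
      Finset.prod_image (fun a _ b _ h => htinj h)]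
  have hsign : ∀ r : Fin k, D r = e * ∏ u ∈ T.erase (t r), (t r - u) := by
    intro r
    simp only [hD]
    rw [hQ r]
    have h1 : ∀ j ∈ Finset.univ.erase r, t j - t r = (-1) * (t r - t j) := by
      intro j _; ring
    rw [Finset.prod_congr rfl h1, Finset.prod_mul_distrib, Finset.prod_const,
      Finset.card_erase_of_mem (Finset.mem_univ r), Finset.card_univ, Fintype.card_fin, ← he]
  have hee : e * e = 1 := by
    rw [he, ← pow_add]
    have : k - 1 + (k - 1) = 2 * (k - 1) := by omega
    rw [this, pow_mul]
    norm_num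
  have harith : ∀ z Q : ℝ, z / (e * Q) = e * (z / Q) := by
    intro z Q
    have hinv : e⁻¹ = e := inv_eq_of_mul_eq_one_right hee
    rw [div_mul_eq_div_div, div_eq_mul_inv z e, hinv]
    ring
  have hke : (-1:ℝ) ^ k * e = -1 := by
    rw [he, ← pow_add, show k + (k - 1) = 2 * (k - 1) + 1 by omega, pow_succ, pow_mul]
    norm_num
  have hDne : ∀ r, D r ≠ 0 := by
    intro r
    rw [hD]
    refine Finset.prod_ne_zero_iff.2 fun j hj => sub_ne_zero.2 fun hc => ?_
    exact (Finset.ne_of_mem_erase hj) (htinj hc)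
  -- bridge between Fin-indexed sums and dd
  have hS : ∀ g : ℝ → ℝ,
      (∑ r, g (t r) / D r) = e * dd T g := by
    intro g
    rw [dd, hT, Finset.sum_image (fun a _ b _ h => htinj h), Finset.mul_sum, ← hT]
    refine Finset.sum_congr rfl fun r _ => ?_
    rw [hsign r]
    exact harith _ _
  -- sigma function and canonical representation of F
  set σ : ℝ → ℝ := fun u => if u < 0 then u ^ (k - 2) else 0 with hσ
  have habs : ∀ u : ℝ, |u| * u ^ (k - 3) = u ^ (k - 2) - 2 * σ u := by
    intro u
    have hk2 : k - 2 = (k - 3) + 1 := by omega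
    rcases lt_trichotomy u 0 with h | h | h
    · rw [abs_of_neg h, hσ]
      simp only [if_pos h]
      rw [hk2, pow_succ']
      ring
    · subst h
      rw [hσ]
      simp only [lt_irrefl, if_false]
      rw [abs_zero, zero_mul, zero_pow (by omega : k - 2 ≠ 0)]
      ring
    · rw [abs_of_pos h, hσ]
      simp only [if_neg (not_lt.2 h.le)]
      rw [hk2, pow_succ']
      ring
  have hsum0 : ∀ x : ℝ, (∑ r, (1 - t r * x) ^ (k - 2) / D r) = 0 := by
    intro x
    rw [hS (fun u => (1 - u * x) ^ (k - 2))]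
    have : dd T (fun u => (1 - u * x) ^ (k - 2)) = 0 := by
      rw [dd_congr (g := fun u => (1 + (-x) * u) ^ (k - 2)) (fun u _ => by ring_nf)]
      exact dd_affine_pow T 1 (-x) (k - 2) (by omega)
    rw [this, mul_zero]
  set c : ℝ := ((k : ℝ) - 1) * Pn / 2 with hc
  have hcpos : 0 < c := by
    rw [hc]
    have h3 : (3 : ℝ) ≤ (k : ℝ) := by exact_mod_cast hk
    exact div_pos (mul_pos (by linarith) hPnpos) two_pos
  have hFrep : ∀ x : ℝ, F x = -(2 * c) * ∑ r, σ (1 - t r * x) / D r := by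
    intro x
    rw [hF x]
    have hterm : ∀ r : Fin k, |1 - t r * x| * (1 - t r * x) ^ (k - 3) / D r
        = (1 - t r * x) ^ (k - 2) / D r - 2 * (σ (1 - t r * x) / D r) := by
      intro r
      rw [habs]
      ring
    calc ((k : ℝ) - 1) * Pn / 2 * ∑ r, |1 - t r * x| * (1 - t r * x) ^ (k - 3) / D r
        = c * ∑ r, ((1 - t r * x) ^ (k - 2) / D r - 2 * (σ (1 - t r * x) / D r)) := by
          rw [hc, Finset.sum_congr rfl fun r _ => hterm r]
      _ = c * ((∑ r, (1 - t r * x) ^ (k - 2) / D r) - 2 * ∑ r, σ (1 - t r * x) / D r) := by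
          rw [Finset.sum_sub_distrib, Finset.mul_sum]
      _ = -(2 * c) * ∑ r, σ (1 - t r * x) / D r := by
          rw [hsum0 x]
          ring
  -- index of max and min
  have hle : ∀ r : Fin k, t r ≤ t ⟨k - 1, by omega⟩ := by
    intro r
    exact htmono.monotone (by omega : r.1 ≤ k - 1)
  have hge : ∀ r : Fin k, t ⟨0, by omega⟩ ≤ t r := by
    intro r
    exact htmono.monotone (by omega : (0:ℕ) ≤ r.1)
  set tmax : ℝ := t ⟨k - 1, by omega⟩ with htmax
  set tmin : ℝ := t ⟨0, by omega⟩ with htmin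
  have htmaxpos : 0 < tmax := htpos _
  have htminpos : 0 < tmin := htpos _
  -- Claim 1 : nonnegativity
  have claim1 : ∀ x : ℝ, 0 ≤ F x := by
    intro x
    rw [hFrep x]
    rcases le_or_gt x 0 with hx | hx
    · have hz : ∀ r : Fin k, σ (1 - t r * x) = 0 := by
        intro r
        rw [hσ]
        simp only []
        rw [if_neg]
        push_neg
        nlinarith [htpos r]
      rw [Finset.sum_congr rfl fun r _ => by rw [hz r, zero_div]]
      simp
    · -- x > 0
      have hxne : x ≠ 0 := ne_of_gt hx
      have hrw : ∀ r : Fin k, σ (1 - t r * x)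
          = ((-1:ℝ) ^ k * x ^ (k - 2)) * tau (k - 2) x⁻¹ (t r) := by
        intro r
        rw [hσ, tau]
        simp only []
        have hiff : 1 - t r * x < 0 ↔ x⁻¹ < t r := by
          rw [sub_neg, inv_eq_one_div, div_lt_iff₀ hx]
        by_cases h : x⁻¹ < t r
        · rw [if_pos (hiff.2 h), if_pos h]
          have hval : (-1:ℝ) ^ k * x ^ (k - 2) * (t r - x⁻¹) ^ (k - 2)
              = ((-1) * x * (t r - x⁻¹)) ^ (k - 2) := by
            rw [mul_pow, mul_pow]
            congr 1
            rw [show (k:ℕ) = (k - 2) + 2 by omega] at hk ⊢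
            rw [pow_add]
            norm_num
          rw [hval]
          congr 1
          field_simp
          ring
        · rw [if_neg (fun hc => h (hiff.1 hc)), if_neg h, mul_zero]
      rw [Finset.sum_congr rfl fun r _ => by
        rw [hrw r, mul_div_assoc], ← Finset.mul_sum, hS (tau (k - 2) x⁻¹)]
      have hdd : 0 ≤ dd T (tau (k - 2) x⁻¹) := by
        have := dd_tau_nonneg k T hTcard (by omega) x⁻¹
        exact this
      have hsgn : -(2 * c) * ((-1:ℝ) ^ k * x ^ (k - 2) * (e * dd T (tau (k - 2) x⁻¹)))
          = (2 * c) * x ^ (k - 2) * dd T (tau (k - 2) x⁻¹) := by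
        calc -(2 * c) * ((-1:ℝ) ^ k * x ^ (k - 2) * (e * dd T (tau (k - 2) x⁻¹)))
            = -(2 * c) * ((-1:ℝ) ^ k * e) * x ^ (k - 2) * dd T (tau (k - 2) x⁻¹) := by ring
          _ = (2 * c) * x ^ (k - 2) * dd T (tau (k - 2) x⁻¹) := by rw [hke]; ring
      rw [hsgn]
      have : (0:ℝ) ≤ (2 * c) * x ^ (k - 2) :=
        mul_nonneg (by linarith) (pow_nonneg hx.le _)
      exact mul_nonneg this hdd
  -- Claim 2 : vanishing outside the interval
  have claim2 : ∀ x : ℝ, x ∉ Set.Icc (tmax⁻¹) (tmin⁻¹) → F x = 0 := by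
    intro x hx
    rw [Set.mem_Icc, not_and_or] at hx
    rw [hFrep x]
    rcases hx with hx | hx
    · push_neg at hx
      have hz : ∀ r : Fin k, σ (1 - t r * x) = 0 := by
        intro r
        rw [hσ]
        simp only []
        rw [if_neg]
        push_neg
        rcases le_or_gt x 0 with hx0 | hx0
        · nlinarith [htpos r]
        · have h1 : t r * x ≤ tmax * x := mul_le_mul_of_nonneg_right (hle r) hx0.le
          have h2 : tmax * x < tmax * tmax⁻¹ := by
            exact mul_lt_mul_of_pos_left hx htmaxpos
          rw [mul_inv_cancel₀ (ne_of_gt htmaxpos)] at h2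
          linarith
      rw [Finset.sum_congr rfl fun r _ => by rw [hz r, zero_div]]
      simp
    · push_neg at hx
      have hxpos : 0 < x := lt_trans (inv_pos.2 htminpos) hx
      have hz : ∀ r : Fin k, σ (1 - t r * x) = (1 - t r * x) ^ (k - 2) := by
        intro r
        rw [hσ]
        simp only []
        rw [if_pos]
        have h1 : tmin * tmin⁻¹ < tmin * x := mul_lt_mul_of_pos_left hx htminpos
        rw [mul_inv_cancel₀ (ne_of_gt htminpos)] at h1
        have h2 : tmin * x ≤ t r * x := mul_le_mul_of_nonneg_right (hge r) hxpos.le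
        linarith
      rw [Finset.sum_congr rfl fun r _ => by rw [hz r], hsum0 x, mul_zero]
  refine ⟨claim1, claim2, ?_⟩
  -- Claim 3 : the integral equals 1
  have hPnne : Pn ≠ 0 := ne_of_gt hPnpos
  have hcont : Continuous F := by
    have hFfun : F = fun x =>
        c * ∑ r, |1 - t r * x| * (1 - t r * x) ^ (k - 3) / D r := by
      funext x
      exact hF x
    rw [hFfun]
    refine continuous_const.mul (continuous_finset_sum _ fun r _ => ?_)
    exact (((continuous_const.sub (continuous_const.mul continuous_id)).abs).mul
      ((continuous_const.sub (continuous_const.mul continuous_id)).pow _)).div_const _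
  set ρ : ℝ → ℝ := fun u => if u < 0 then u ^ (k - 1) else 0 with hρ
  set G : ℝ → ℝ := fun x => Pn * ∑ r, ρ (1 - t r * x) / (t r * D r) with hG
  have hcancel : ∀ (z b a : ℝ), a ≠ 0 → z * -a / (a * b) = -(z / b) := by
    intro z b a ha
    rw [mul_neg, neg_div, mul_comm a b, mul_div_mul_right _ _ ha]
  have hGderiv : ∀ x, HasDerivAt G (F x) x := by
    intro x
    have hterm : ∀ r : Fin k, HasDerivAt (fun y => ρ (1 - t r * y) / (t r * D r))
        (((((k:ℕ) - 2 : ℕ) : ℝ) + 1) * σ (1 - t r * x) * (-(t r)) / (t r * D r)) x := by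
      intro r
      have hinner : HasDerivAt (fun y : ℝ => 1 - t r * y) (-(t r)) x := by
        simpa using ((hasDerivAt_id x).const_mul (t r)).const_sub 1
      have houter := rho_hasDerivAt (k - 2) (by omega) (1 - t r * x)
      have hexp : (k - 2) + 1 = k - 1 := by omega
      rw [hexp] at houter
      have hcomp := HasDerivAt.comp x houter hinner
      have hcomp2 : HasDerivAt (fun y => ρ (1 - t r * y))
          ((((k - 2 : ℕ) : ℝ) + 1) * σ (1 - t r * x) * (-(t r))) x := by
        have hfeq : ((fun v : ℝ => if v < 0 then v ^ (k - 1) else 0) ∘ fun y => 1 - t r * y)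
            = fun y => ρ (1 - t r * y) := by
          funext y
          simp [Function.comp, hρ]
        rw [hfeq] at hcomp
        convert hcomp using 1
      exact hcomp2.div_const _
    have hsum := HasDerivAt.sum fun r (_ : r ∈ Finset.univ) => hterm r
    have hG' := hsum.const_mul Pn
    have hval : Pn * ∑ r, ((((k - 2 : ℕ) : ℝ) + 1) * σ (1 - t r * x) * (-(t r)) / (t r * D r))
        = F x := by
      rw [hFrep x, Finset.mul_sum, Finset.mul_sum]
      refine Finset.sum_congr rfl fun r _ => ?_
      have htr : t r ≠ 0 := ne_of_gt (htpos r)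
      have hcast : (((k - 2 : ℕ) : ℝ) + 1) = (k : ℝ) - 1 := by
        have : (k:ℕ) - 2 + 1 = k - 1 := by omega
        rw [show (((k - 2:ℕ)):ℝ) + 1 = (((k - 2 + 1 : ℕ)):ℝ) by push_cast; ring, this]
        push_cast [Nat.cast_sub (by omega : 1 ≤ k)]
        ring
      rw [hcast, hcancel _ _ _ htr, hc]
      ring
    rw [← hval]
    refine hG'.congr_of_eventuallyEq (Filter.Eventually.of_forall fun y => ?_)
    exact (congrArg (fun z => Pn * z) (Finset.sum_apply y Finset.univ fun i y => ρ (1 - t i * y) / (t i * D i))).symm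
  have hmaxmin : tmin ≤ tmax := hge _
  have hab : tmax⁻¹ ≤ tmin⁻¹ := by
    apply inv_anti₀ htminpos hmaxmin
  have hint : (∫ x : ℝ, F x) = ∫ x in Set.Icc tmax⁻¹ tmin⁻¹, F x :=
    (setIntegral_eq_integral_of_forall_compl_eq_zero fun x hx => claim2 x hx).symm
  rw [hint, integral_Icc_eq_integral_Ioc, ← intervalIntegral.integral_of_le hab,
    intervalIntegral.integral_eq_sub_of_hasDerivAt (fun y _ => hGderiv y)
      (hcont.intervalIntegrable _ _)]
  -- G at the left endpoint vanishes
  have hGa : G tmax⁻¹ = 0 := by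
    rw [hG]
    simp only []
    have hz : ∀ r : Fin k, ρ (1 - t r * tmax⁻¹) = 0 := by
      intro r
      rw [hρ]
      simp only []
      rw [if_neg]
      push_neg
      have h1 : t r * tmax⁻¹ ≤ tmax * tmax⁻¹ :=
        mul_le_mul_of_nonneg_right (hle r) (inv_nonneg.2 htmaxpos.le)
      rw [mul_inv_cancel₀ (ne_of_gt htmaxpos)] at h1
      linarith
    rw [Finset.sum_congr rfl fun r _ => by rw [hz r, zero_div]]
    simp
  -- G at the right endpoint equals 1
  have hGb : G tmin⁻¹ = 1 := by
    set β : ℝ := tmin⁻¹ with hβ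
    have hβpos : 0 < β := inv_pos.2 htminpos
    have hz : ∀ r : Fin k, ρ (1 - t r * β) = (1 - t r * β) ^ (k - 1) := by
      intro r
      have hle0 : 1 - t r * β ≤ 0 := by
        have h1 : tmin * β ≤ t r * β := mul_le_mul_of_nonneg_right (hge r) hβpos.le
        rw [hβ, mul_inv_cancel₀ (ne_of_gt htminpos)] at h1
        linarith
      rw [hρ]
      simp only []
      rcases lt_or_eq_of_le hle0 with h | h
      · rw [if_pos h]
      · rw [if_neg (by rw [h]; exact lt_irrefl _), h,
          zero_pow (by omega : k - 1 ≠ 0)]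
    -- the key algebraic identity via nodes {0} ∪ T
    have h0T : (0:ℝ) ∉ T := fun h => lt_irrefl 0 (hTpos 0 h)
    have hT'card : (insert (0:ℝ) T).card = k + 1 := by
      rw [Finset.card_insert_of_notMem h0T, hTcard]
    have hdd0 : dd (insert 0 T) (fun u => (1 + (-β) * u) ^ (k - 1)) = 0 :=
      dd_affine_pow _ 1 (-β) (k - 1) (by rw [hT'card]; omega)
    rw [dd, Finset.sum_insert h0T] at hdd0
    have h1 : (1 + (-β) * 0) ^ (k-1) / ∏ u ∈ (insert (0:ℝ) T).erase 0, ((0:ℝ) - u)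
        = 1 / ((-1:ℝ)^k * Pn) := by
      rw [Finset.erase_insert h0T]
      congr 1
      · norm_num
      · have hterm : ∀ u ∈ T, (0:ℝ) - u = -1 * u := fun u _ => by ring
        rw [Finset.prod_congr rfl hterm, Finset.prod_mul_distrib, Finset.prod_const, hTcard]
        congr 1
        rw [hT, Finset.prod_image fun a _ b _ h => htinj h]
    have h2 : ∀ y ∈ T, (1 + (-β) * y) ^ (k-1) / ∏ u ∈ (insert (0:ℝ) T).erase y, (y - u)
        = (1 - y * β)^(k-1) / (y * ∏ u ∈ T.erase y, (y - u)) := by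
      intro y hy
      have hyne : y ≠ 0 := ne_of_gt (hTpos y hy)
      rw [Finset.erase_insert_of_ne (Ne.symm hyne),
        Finset.prod_insert (fun hc => h0T (Finset.mem_of_mem_erase hc)), sub_zero]
      congr 2
      ring
    rw [Finset.sum_congr rfl h2, h1] at hdd0
    -- convert the Fin-indexed sum in G β
    have himg : (∑ y ∈ T, (1 - y * β)^(k-1) / (y * ∏ u ∈ T.erase y, (y - u)))
        = ∑ r, (1 - t r * β)^(k-1) / (t r * ∏ u ∈ T.erase (t r), (t r - u)) := by
      conv_lhs => rw [hT]
      rw [Finset.sum_image fun a _ b _ h => htinj h]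
    have hconv : (∑ r, ρ (1 - t r * β) / (t r * D r))
        = e * ∑ y ∈ T, (1 - y * β)^(k-1) / (y * ∏ u ∈ T.erase y, (y - u)) := by
      rw [himg, Finset.mul_sum]
      refine Finset.sum_congr rfl fun r _ => ?_
      rw [hz r, hsign r]
      have hmm : t r * (e * ∏ u ∈ T.erase (t r), (t r - u))
          = e * (t r * ∏ u ∈ T.erase (t r), (t r - u)) := by ring
      rw [hmm, harith]
    rw [hG]
    simp only []
    rw [hconv]
    -- finish with sign bookkeeping
    have hm1ne : ((-1:ℝ))^k ≠ 0 := pow_ne_zero _ (by norm_num)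
    have hSval : (∑ y ∈ T, (1 - y * β)^(k-1) / (y * ∏ u ∈ T.erase y, (y - u)))
        = -(1 / ((-1:ℝ)^k * Pn)) := by linarith [hdd0]
    rw [hSval]
    field_simp
    linear_combination (-e) * hke + ((-1:ℝ)^k) * hee
  rw [hGa, hGb]
  ring
end

section
/- Let x₁, …, x_k be complex numbers and let p ≥ 0 be an integer. For every complex number w with w·x_b ≠ 1 for all b ∈ {1,…,k}, the p-th derivative at w of the function u ↦ ∏_{b=1}^k (1 − u·x_b)^{−1} equals p! · (∏_{b=1}^k (1 − w·x_b)^{−1}) · h_p(x₁/(1 − w·x₁), x₂/(1 − w·x₂), …, x_k/(1 − w·x_k)). -/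
open Finset
open scoped Classical

/-- The complete homogeneous symmetric polynomial `h_p` evaluated at `x 0, …, x (k-1)`:
the sum of all monomials of degree `p` (with `h₀ = 1`). -/
def CompleteHomogeneous {R : Type*} [CommRing R] (k p : ℕ) (x : Fin k → R) : R :=
  ∑ d ∈ (Fintype.piFinset fun _ : Fin k => Finset.range (p + 1)).filter
      (fun d => ∑ j, d j = p), ∏ j, x j ^ d j

/-- The index set of `h_p`. -/
noncomputable def Sset (k p : ℕ) : Finset (Fin k → ℕ) :=
  (Fintype.piFinset fun _ : Fin k => Finset.range (p + 1)).filter (fun d => ∑ j, d j = p)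

lemma mem_Sset {k p : ℕ} {d : Fin k → ℕ} : d ∈ Sset k p ↔ ∑ j, d j = p := by
  simp only [Sset, mem_filter, Fintype.mem_piFinset, mem_range, Nat.lt_succ_iff]
  constructor
  · exact fun h => h.2
  · intro h
    refine ⟨fun j => ?_, h⟩
    rw [← h]
    exact Finset.single_le_sum (fun _ _ => Nat.zero_le _) (mem_univ j)

/-- The monomial term. -/
noncomputable def Tfun (k : ℕ) (x : Fin k → ℂ) (d : Fin k → ℕ) (w : ℂ) : ℂ :=
  ∏ b, x b ^ d b * ((1 - w * x b) ^ (d b + 1))⁻¹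

lemma CH_zero (k : ℕ) (y : Fin k → ℂ) : CompleteHomogeneous k 0 y = 1 := by
  rw [CompleteHomogeneous]
  have h : (Fintype.piFinset fun _ : Fin k => Finset.range (0 + 1)).filter
      (fun d => ∑ j, d j = 0) = {fun _ => 0} := by
    ext d
    simp only [mem_filter, Fintype.mem_piFinset, mem_range, Nat.lt_succ_iff, Nat.le_zero,
      Finset.mem_singleton, Finset.sum_eq_zero_iff, mem_univ, true_implies, funext_iff]
    tauto
  rw [h]
  simp

lemma prod_CH_eq (k p : ℕ) (x : Fin k → ℂ) (w : ℂ) (_hw : ∀ b, 1 - w * x b ≠ 0) :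
    (∏ b, (1 - w * x b)⁻¹) * CompleteHomogeneous k p (fun b => x b / (1 - w * x b)) =
      ∑ d ∈ Sset k p, Tfun k x d w := by
  rw [CompleteHomogeneous, ← Sset, Finset.mul_sum]
  refine Finset.sum_congr rfl fun d _ => ?_
  rw [Tfun, ← Finset.prod_mul_distrib]
  refine Finset.prod_congr rfl fun b _ => ?_
  have h : ((1 - w * x b) ^ (d b + 1))⁻¹ = (1 - w * x b)⁻¹ * ((1 - w * x b) ^ d b)⁻¹ := by
    rw [pow_succ, mul_inv, mul_comm]
  rw [div_pow, h, div_eq_mul_inv]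
  ring

lemma Tfun_update (k : ℕ) (x : Fin k → ℂ) (d : Fin k → ℕ) (w : ℂ) (a : Fin k) :
    Tfun k x (Function.update d a (d a + 1)) w =
      (x a ^ (d a + 1) * ((1 - w * x a) ^ (d a + 2))⁻¹) *
        ∏ j ∈ univ.erase a, x j ^ d j * ((1 - w * x j) ^ (d j + 1))⁻¹ := by
  rw [Tfun, ← Finset.mul_prod_erase univ _ (mem_univ a)]
  congr 1
  · simp [Function.update_self]
  · exact Finset.prod_congr rfl fun j hj => by
      rw [Function.update_of_ne (Finset.mem_erase.mp hj).1]

lemma factor_hasDerivAt (n : ℕ) (y w : ℂ) (h : 1 - w * y ≠ 0) :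
    HasDerivAt (fun u : ℂ => y ^ n * ((1 - u * y) ^ (n + 1))⁻¹)
      (((n : ℂ) + 1) * y ^ (n + 1) * ((1 - w * y) ^ (n + 2))⁻¹) w := by
  have h1 : HasDerivAt (fun u : ℂ => 1 - u * y) (-y) w := by
    simpa using ((hasDerivAt_id w).mul_const y).const_sub 1
  have h2 := (h1.fun_pow (n + 1)).fun_inv (pow_ne_zero _ h)
  have h3 := h2.const_mul (y ^ n)
  refine h3.congr_deriv ?_
  rw [Nat.add_sub_cancel]
  push_cast
  field_simp
  ring

lemma Tfun_hasDerivAt (k : ℕ) (x : Fin k → ℂ) (d : Fin k → ℕ) (w : ℂ)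
    (hw : ∀ b, 1 - w * x b ≠ 0) :
    HasDerivAt (Tfun k x d)
      (∑ a, ((d a : ℂ) + 1) * Tfun k x (Function.update d a (d a + 1)) w) w := by
  have h := HasDerivAt.fun_finsetProd (u := univ)
    (f := fun b u => x b ^ d b * ((1 - u * x b) ^ (d b + 1))⁻¹)
    (f' := fun b => ((d b : ℂ) + 1) * x b ^ (d b + 1) * ((1 - w * x b) ^ (d b + 2))⁻¹)
    (x := w) (fun b _ => factor_hasDerivAt (d b) (x b) w (hw b))
  have he : Tfun k x d = fun u => ∏ b, x b ^ d b * ((1 - u * x b) ^ (d b + 1))⁻¹ := by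
    funext u; rfl
  rw [he]
  refine h.congr_deriv ?_
  symm
  refine Finset.sum_congr rfl fun a _ => ?_
  rw [Tfun_update, smul_eq_mul]
  ring

lemma sum_step (k p : ℕ) (x : Fin k → ℂ) (w : ℂ) :
    ∑ d ∈ Sset k p, ∑ a, ((d a : ℂ) + 1) * Tfun k x (Function.update d a (d a + 1)) w =
      ((p : ℂ) + 1) * ∑ e ∈ Sset k (p + 1), Tfun k x e w := by
  have key : ∀ a : Fin k,
      ∑ d ∈ Sset k p, ((d a : ℂ) + 1) * Tfun k x (Function.update d a (d a + 1)) w =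
        ∑ e ∈ Sset k (p + 1), (e a : ℂ) * Tfun k x e w := by
    intro a
    conv_rhs => rw [← Finset.sum_filter_of_ne (p := fun e => e a ≠ 0) (by
      intro e _ hne h0
      rw [h0] at hne
      simp at hne)]
    refine Finset.sum_bij' (fun d _ => Function.update d a (d a + 1))
      (fun e _ => Function.update e a (e a - 1)) ?_ ?_ ?_ ?_ ?_
    · intro d hd
      rw [Finset.mem_filter]
      constructor
      · rw [mem_Sset, Finset.sum_update_of_mem (mem_univ a), ← Finset.erase_eq]
        have h2 := mem_Sset.mp hd
        rw [← Finset.add_sum_erase univ d (mem_univ a)] at h2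
        omega
      · simp [Function.update_self]
    · intro e he
      rw [Finset.mem_filter, mem_Sset] at he
      obtain ⟨he1, _⟩ := he
      rw [mem_Sset, Finset.sum_update_of_mem (mem_univ a), ← Finset.erase_eq]
      rw [← Finset.add_sum_erase univ e (mem_univ a)] at he1
      omega
    · intro d _
      funext j
      by_cases hj : j = a
      · subst hj; simp
      · simp [Function.update_of_ne hj]
    · intro e he
      rw [Finset.mem_filter] at he
      funext j
      by_cases hj : j = a
      · subst hj
        simp only [Function.update_self]
        omega
      · simp [Function.update_of_ne hj]
    · intro d _
      rw [Function.update_self]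
      push_cast
      ring
  calc ∑ d ∈ Sset k p, ∑ a, ((d a : ℂ) + 1) * Tfun k x (Function.update d a (d a + 1)) w
      = ∑ a, ∑ d ∈ Sset k p, ((d a : ℂ) + 1) * Tfun k x (Function.update d a (d a + 1)) w :=
        Finset.sum_comm
    _ = ∑ a : Fin k, ∑ e ∈ Sset k (p + 1), (e a : ℂ) * Tfun k x e w :=
        Finset.sum_congr rfl fun a _ => key a
    _ = ∑ e ∈ Sset k (p + 1), ∑ a, (e a : ℂ) * Tfun k x e w := Finset.sum_comm
    _ = ((p : ℂ) + 1) * ∑ e ∈ Sset k (p + 1), Tfun k x e w := by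
        rw [Finset.mul_sum]
        refine Finset.sum_congr rfl fun e he => ?_
        rw [← Finset.sum_mul, ← Nat.cast_sum, mem_Sset.mp he]
        push_cast
        ring

/-- The `p`-th derivative of `u ↦ ∏_b (1 - u x_b)⁻¹` at a point `w` with `w x_b ≠ 1` for
all `b` equals `p! (∏_b (1 - w x_b)⁻¹) · h_p(x₁/(1-w x₁), …, x_k/(1-w x_k))`. -/
theorem iteratedDeriv_prod_inv_one_sub
    (k p : ℕ) (x : Fin k → ℂ) (w : ℂ) (hw : ∀ b, w * x b ≠ 1) :
    iteratedDeriv p (fun u : ℂ => ∏ b, (1 - u * x b)⁻¹) w =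
      (p.factorial : ℂ) * (∏ b, (1 - w * x b)⁻¹) *
        CompleteHomogeneous k p (fun b => x b / (1 - w * x b)) := by
  have hU : IsOpen {z : ℂ | ∀ b, z * x b ≠ 1} := by
    have h : {z : ℂ | ∀ b, z * x b ≠ 1} = ⋂ b, (fun z => z * x b) ⁻¹' {(1 : ℂ)}ᶜ := by
      ext z; simp [Set.mem_iInter]
    rw [h]
    exact isOpen_iInter_of_finite fun b =>
      (isOpen_compl_singleton).preimage (continuous_mul_right (x b))
  induction p generalizing w hw with
  | zero =>
    rw [iteratedDeriv_zero, CH_zero]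
    simp
  | succ p ih =>
    have hw' : ∀ b, 1 - w * x b ≠ 0 := fun b => sub_ne_zero.mpr fun h => hw b h.symm
    rw [iteratedDeriv_succ]
    have hev : iteratedDeriv p (fun u : ℂ => ∏ b, (1 - u * x b)⁻¹) =ᶠ[nhds w]
        fun z => (p.factorial : ℂ) * ∑ d ∈ Sset k p, Tfun k x d z := by
      filter_upwards [hU.mem_nhds hw] with z hz
      have hz' : ∀ b, 1 - z * x b ≠ 0 := fun b => sub_ne_zero.mpr fun h => hz b h.symm
      rw [ih z hz, mul_assoc, prod_CH_eq k p x z hz']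
    rw [hev.deriv_eq]
    have hd : HasDerivAt (fun z => (p.factorial : ℂ) * ∑ d ∈ Sset k p, Tfun k x d z)
        ((p.factorial : ℂ) * (((p : ℂ) + 1) * ∑ e ∈ Sset k (p + 1), Tfun k x e w)) w := by
      have := (HasDerivAt.fun_sum (fun d (_ : d ∈ Sset k p) => Tfun_hasDerivAt k x d w hw')).const_mul
        (p.factorial : ℂ)
      rwa [sum_step] at this
    rw [hd.deriv, ← prod_CH_eq k (p + 1) x w hw', Nat.factorial_succ]
    push_cast
    ring
end

section
/- Let n₁ < n₂ < ⋯ < n_k be distinct positive integers with gcd(n₁,…,n_k) = 1, let δ = gcd(n₂ − n₁, …, n_k − n_{k−1}), fix an integer N ≥ 1, set m = gcd(δ, N), let ω = e^{2πi/N} ∈ ℂ, and let Γ = {t ∈ ℤ/Nℤ : n₁·t = n₂·t = ⋯ = n_k·t in ℤ/Nℤ}. Then for all integers i and n: Σ over t ∈ Γ of ω^{(i·n₁ − n)·t} equals m if n ≡ i·n₁ (mod m), and equals 0 if n ≢ i·n₁ (mod m). (Here the exponent (i·n₁ − n)·t is well defined since ω^N = 1.) -/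
open Finset
open scoped Classical

/-- **An exponential sum.**  With `ω = e^{2πi/N}` and
`Γ = {t ∈ ℤ/Nℤ : n₁t = ⋯ = n_kt}`, for all integers `i` and `n`:
`Σ_{t ∈ Γ} ω^{(i n₁ - n) t} = m` if `n ≡ i n₁ (mod m)` and `= 0` otherwise, where
`m = gcd(δ, N)`.  (The elements of `Γ` are enumerated by their representatives
`t ∈ {0, …, N-1}`; the exponent is well defined since `ω^N = 1`.) -/
theorem exponential_sum_over_Gamma
    (k : ℕ) (hk : 1 ≤ k) (n : Fin k → ℕ) (hpos : ∀ j, 0 < n j) (hmono : StrictMono n)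
    (hgcd : Finset.univ.gcd n = 1)
    (δ : ℕ)
    (hδ : δ = Finset.univ.gcd (fun j : Fin (k - 1) =>
      n ⟨j.val + 1, by have := j.isLt; omega⟩ - n ⟨j.val, by have := j.isLt; omega⟩))
    (N : ℕ) (hN : 1 ≤ N) (m : ℕ) (hm : m = Nat.gcd δ N)
    (ω : ℂ) (hω : ω = Complex.exp (2 * Real.pi * Complex.I / N))
    (i x : ℤ) :
    (∑ t ∈ (Finset.range N).filter
        (fun t : ℕ => ∀ j : Fin k,
          (n j : ZMod N) * (t : ZMod N) = (n ⟨0, by omega⟩ : ZMod N) * (t : ZMod N)),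
        ω ^ ((i * (n ⟨0, by omega⟩ : ℤ) - x) * (t : ℤ))) =
      if x ≡ i * (n ⟨0, by omega⟩ : ℤ) [ZMOD m] then (m : ℂ) else 0 := by
  have hk0 : 0 < k := hk
  show (∑ t ∈ (Finset.range N).filter
        (fun t : ℕ => ∀ j : Fin k,
          (n j : ZMod N) * (t : ZMod N) = (n ⟨0, hk0⟩ : ZMod N) * (t : ZMod N)),
        ω ^ ((i * (n ⟨0, hk0⟩ : ℤ) - x) * (t : ℤ))) =
      if x ≡ i * (n ⟨0, hk0⟩ : ℤ) [ZMOD m] then (m : ℂ) else 0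
  have hmono' : Monotone n := hmono.monotone
  set n0 : Fin k := ⟨0, hk0⟩ with hn0
  -- δ divides all differences n j - n 0
  have hdvd1 : ∀ jv (hj : jv < k), δ ∣ n ⟨jv, hj⟩ - n n0 := by
    intro jv
    induction jv with
    | zero => intro hj; simp [hn0]
    | succ jv ih =>
      intro hj
      have h1 : δ ∣ n ⟨jv + 1, hj⟩ - n ⟨jv, by omega⟩ := by
        rw [hδ]
        simpa using Finset.gcd_dvd (Finset.mem_univ (⟨jv, by omega⟩ : Fin (k - 1)))
      have h2 := ih (by omega)
      have hle1 : n n0 ≤ n ⟨jv, by omega⟩ := hmono' (by simp [hn0, Fin.le_def])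
      have hle2 : n ⟨jv, by omega⟩ ≤ n ⟨jv + 1, hj⟩ := hmono' (by simp [Fin.le_def])
      have heq : n ⟨jv + 1, hj⟩ - n n0 =
          (n ⟨jv + 1, hj⟩ - n ⟨jv, by omega⟩) + (n ⟨jv, by omega⟩ - n n0) := by omega
      rw [heq]; exact Nat.dvd_add h1 h2
  -- the gcd of all differences divides δ
  have hdvd2 : Finset.univ.gcd (fun j : Fin k => n j - n n0) ∣ δ := by
    rw [hδ]
    refine Finset.dvd_gcd ?_
    rintro ⟨jv, hj⟩ -
    have ha : Finset.univ.gcd (fun j : Fin k => n j - n n0) ∣ n ⟨jv + 1, by omega⟩ - n n0 :=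
      Finset.gcd_dvd (Finset.mem_univ _)
    have hb : Finset.univ.gcd (fun j : Fin k => n j - n n0) ∣ n ⟨jv, by omega⟩ - n n0 :=
      Finset.gcd_dvd (Finset.mem_univ _)
    have hle1 : n n0 ≤ n ⟨jv, by omega⟩ := hmono' (by simp [hn0, Fin.le_def])
    have hle2 : n ⟨jv, by omega⟩ ≤ n ⟨jv + 1, by omega⟩ := hmono' (by simp [Fin.le_def])
    have heq : n ⟨jv + 1, by omega⟩ - n ⟨jv, by omega⟩ =
        (n ⟨jv + 1, by omega⟩ - n n0) - (n ⟨jv, by omega⟩ - n n0) := by omega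
    rw [heq]
    exact Nat.dvd_sub ha hb
  -- basic divisibility facts about m and q
  have hmpos : 0 < m := by rw [hm]; exact Nat.gcd_pos_of_pos_right δ (by omega)
  have hmN : m ∣ N := hm ▸ Nat.gcd_dvd_right δ N
  have hmδ : m ∣ δ := hm ▸ Nat.gcd_dvd_left δ N
  set q : ℕ := N / m with hq
  have hqN : m * q = N := Nat.mul_div_cancel' hmN
  have hqpos : 0 < q := Nat.div_pos (Nat.le_of_dvd (by omega) hmN) hmpos
  have hcop : Nat.Coprime (δ / m) q := by
    have := Nat.coprime_div_gcd_div_gcd (m := δ) (n := N) (by omega : 0 < Nat.gcd δ N)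
    rwa [← hm] at this
  -- characterization of the filter condition
  have hchar : ∀ t : ℕ,
      (∀ j : Fin k, (n j : ZMod N) * (t : ZMod N) = (n n0 : ZMod N) * (t : ZMod N)) ↔ q ∣ t := by
    intro t
    have step1 : (∀ j : Fin k, (n j : ZMod N) * (t : ZMod N) = (n n0 : ZMod N) * (t : ZMod N)) ↔
        (∀ j : Fin k, N ∣ (n j - n n0) * t) := by
      apply forall_congr'
      intro j
      have hle : n n0 ≤ n j := hmono' (by simp [hn0, Fin.le_def])
      rw [show ((n j : ZMod N) * (t : ZMod N)) = ((n j * t : ℕ) : ZMod N) by push_cast; ring,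
        show ((n n0 : ZMod N) * (t : ZMod N)) = ((n n0 * t : ℕ) : ZMod N) by push_cast; ring,
        ZMod.natCast_eq_natCast_iff]
      rw [Nat.ModEq.comm, Nat.modEq_iff_dvd' (Nat.mul_le_mul_right t hle)]
      rw [← Nat.sub_mul]
    have step2 : (∀ j : Fin k, N ∣ (n j - n n0) * t) ↔ N ∣ δ * t := by
      constructor
      · intro h
        have h1 : N ∣ Finset.univ.gcd (fun j : Fin k => (n j - n n0) * t) :=
          Finset.dvd_gcd fun j _ => h j
        have h2 : Finset.univ.gcd (fun j : Fin k => (n j - n n0) * t) =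
            Finset.univ.gcd (fun j : Fin k => n j - n n0) * t := by
          simpa using Finset.gcd_mul_right (s := (Finset.univ : Finset (Fin k)))
            (f := fun j : Fin k => n j - n n0) (a := t)
        rw [h2] at h1
        exact h1.trans (Nat.mul_dvd_mul_right hdvd2 t)
      · intro h j
        exact dvd_trans h (Nat.mul_dvd_mul_right (hdvd1 j.val j.isLt) t)
    have step3 : N ∣ δ * t ↔ q ∣ t := by
      obtain ⟨δ₁, hδ₁⟩ : m ∣ δ := hmδ
      constructor
      · intro h
        have : m * q ∣ m * (δ₁ * t) := by rw [hqN, ← mul_assoc, ← hδ₁]; exact h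
        have h2 : q ∣ δ₁ * t := (mul_dvd_mul_iff_left (by omega : m ≠ 0)).mp this
        have hcop' : Nat.Coprime q δ₁ := by
          have : δ₁ = δ / m := (Nat.div_eq_of_eq_mul_left hmpos (by rw [hδ₁, mul_comm])).symm
          rw [this]; exact hcop.symm
        exact (Nat.Coprime.dvd_of_dvd_mul_left hcop' h2)
      · intro h
        rw [← hqN, hδ₁]
        exact mul_dvd_mul (dvd_mul_right m δ₁) h
    rw [step1, step2, step3]
  -- rewrite the index set
  have hfilter : (Finset.range N).filter
      (fun t : ℕ => ∀ j : Fin k,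
        (n j : ZMod N) * (t : ZMod N) = (n n0 : ZMod N) * (t : ZMod N)) =
      (Finset.range m).image (fun s => s * q) := by
    ext t
    simp only [Finset.mem_filter, Finset.mem_range, Finset.mem_image]
    constructor
    · rintro ⟨htN, hP⟩
      obtain ⟨c, hc⟩ := (hchar t).mp hP
      have h1 : c * q < m * q := by rw [hqN, mul_comm c q, ← hc]; exact htN
      exact ⟨c, Nat.lt_of_mul_lt_mul_right h1, by rw [hc, mul_comm]⟩
    · rintro ⟨s, hs, rfl⟩
      refine ⟨?_, (hchar _).mpr ⟨s, by ring⟩⟩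
      calc s * q < m * q := (Nat.mul_lt_mul_right hqpos).mpr hs
        _ = N := hqN
  -- set up the root of unity computation
  set a : ℤ := i * (n n0 : ℤ) - x with ha
  set r : ℂ := ω ^ (a * (q : ℤ)) with hr
  have h2πI : (2 * (Real.pi : ℂ) * Complex.I) ≠ 0 := by
    simp [Real.pi_ne_zero, Complex.I_ne_zero]
  have hNne : ((N : ℂ)) ≠ 0 := by
    exact_mod_cast (by omega : (N : ℤ) ≠ 0)
  have hqNZ : (m : ℤ) * (q : ℤ) = (N : ℤ) := by exact_mod_cast hqN
  have hωN : ω ^ (N : ℤ) = 1 := by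
    rw [hω, ← Complex.exp_int_mul]
    rw [show ((N : ℤ) : ℂ) * (2 * Real.pi * Complex.I / N) = 2 * Real.pi * Complex.I by
      field_simp; norm_cast]
    exact Complex.exp_two_pi_mul_I
  have hrm : r ^ m = 1 := by
    rw [hr, ← zpow_natCast, ← zpow_mul]
    rw [show a * (q : ℤ) * (m : ℤ) = (N : ℤ) * a by rw [← hqNZ]; ring]
    rw [zpow_mul, hωN, one_zpow]
  have hr1 : r = 1 ↔ (m : ℤ) ∣ a := by
    rw [hr, hω, ← Complex.exp_int_mul, Complex.exp_eq_one_iff]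
    have hiff : ∀ z : ℤ, (((a * q : ℤ) : ℂ) * (2 * Real.pi * Complex.I / N) =
        (z : ℂ) * (2 * Real.pi * Complex.I)) ↔ a * q = z * N := by
      intro z
      rw [show ((a * q : ℤ) : ℂ) * (2 * Real.pi * Complex.I / N) =
          (2 * (Real.pi : ℂ) * Complex.I) * (((a * q : ℤ) : ℂ) / N) by ring,
        show (z : ℂ) * (2 * Real.pi * Complex.I) = (2 * (Real.pi : ℂ) * Complex.I) * z by ring,
        mul_right_inj' h2πI, div_eq_iff hNne]
      constructor
      · intro h; exact_mod_cast h
      · intro h; exact_mod_cast h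
    constructor
    · rintro ⟨z, hz⟩
      have h1 : a * q = z * N := (hiff z).mp hz
      have h2 : a * (q : ℤ) = (z * m) * (q : ℤ) := by rw [h1, ← hqNZ]; ring
      have h3 : a = z * m := by
        have hq0 : (q : ℤ) ≠ 0 := by exact_mod_cast hqpos.ne'
        exact mul_right_cancel₀ hq0 h2
      exact ⟨z, by rw [h3]; ring⟩
    · rintro ⟨c, hc⟩
      refine ⟨c, (hiff c).mpr ?_⟩
      rw [hc, ← hqNZ]; ring
  -- put everything together
  have hcond : (x ≡ i * (n n0 : ℤ) [ZMOD (m : ℕ)]) ↔ (m : ℤ) ∣ a := by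
    rw [Int.modEq_iff_dvd, ha]
  have hinj : ∀ s ∈ Finset.range m, ∀ s' ∈ Finset.range m,
      s * q = s' * q → s = s' := by
    intro s _ s' _ h
    exact Nat.eq_of_mul_eq_mul_right hqpos h
  rw [hfilter, Finset.sum_image hinj]
  have hterm : ∀ s ∈ Finset.range m, ω ^ (a * ((s * q : ℕ) : ℤ)) = r ^ s := by
    intro s _
    rw [show a * ((s * q : ℕ) : ℤ) = (a * (q : ℤ)) * (s : ℤ) by push_cast; ring,
      zpow_mul, zpow_natCast, ← hr]
  rw [Finset.sum_congr rfl hterm]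
  split_ifs with hc
  · have hre : r = 1 := hr1.mpr (hcond.mp hc)
    simp [hre]
  · have hrne : r ≠ 1 := fun h => hc (hcond.mpr (hr1.mp h))
    rw [geom_sum_eq hrne, hrm]
    simp
end
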